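/- arXiv:2507.20652 — 2 statements merged into one kernel-verified Lean document; each statement's English description precedes it below -/
import Mathlib

section
/- Let ψ(x) = B₀x + b₀ + φ(x) where φ is Lipschitz with constant L < σ_min(B₀), and let x* be the unique zero of ψ. Then for all x ∈ ℝⁿ: ⟨x − x*, B₀ᵀ ψ(x)⟩ ≥ ½‖ψ(x)‖². -/
noncomputable def mApp {n : ℕ} (B : Matrix (Fin n) (Fin n) ℝ) (x : EuclideanSpace ℝ (Fin n)) :
    EuclideanSpace ℝ (Fin n) := Matrix.toEuclideanCLM (𝕜 := ℝ) B x

noncomputable def specNorm {n : ℕ} (B : Matrix (Fin n) (Fin n) ℝ) : ℝ :=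
  ‖Matrix.toEuclideanCLM (𝕜 := ℝ) B‖

noncomputable def sigmaMin {n : ℕ} (B : Matrix (Fin n) (Fin n) ℝ) : ℝ :=
  sInf {r : ℝ | ∃ v : EuclideanSpace ℝ (Fin n), ‖v‖ = 1 ∧ r = ‖mApp B v‖}

def vabs {n : ℕ} (v : EuclideanSpace ℝ (Fin n)) : EuclideanSpace ℝ (Fin n) := WithLp.toLp 2 (fun i => |v i|)

lemma sigmaMin_mul_le {n : ℕ} (B : Matrix (Fin n) (Fin n) ℝ) (v : EuclideanSpace ℝ (Fin n)) :
    sigmaMin B * ‖v‖ ≤ ‖mApp B v‖ := by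
  rcases eq_or_ne v 0 with rfl | hv
  · simp [mApp]
  · have hnv : ‖v‖ ≠ 0 := norm_ne_zero_iff.mpr hv
    set e : EuclideanSpace ℝ (Fin n) := ‖v‖⁻¹ • v with he
    have hue : ‖e‖ = 1 := by
      simp [he, norm_smul, abs_of_nonneg (norm_nonneg v), inv_mul_cancel₀ hnv]
    have hbdd : BddBelow {r : ℝ | ∃ v : EuclideanSpace ℝ (Fin n), ‖v‖ = 1 ∧ r = ‖mApp B v‖} :=
      ⟨0, by rintro r ⟨w, -, rfl⟩; exact norm_nonneg _⟩
    have h1 : sigmaMin B ≤ ‖mApp B e‖ := csInf_le hbdd ⟨e, hue, rfl⟩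
    have h2 : ‖mApp B e‖ * ‖v‖ = ‖mApp B v‖ := by
      simp [he, mApp, map_smul, norm_smul, abs_of_nonneg (norm_nonneg v)]
      field_simp
    calc sigmaMin B * ‖v‖ ≤ ‖mApp B e‖ * ‖v‖ :=
          mul_le_mul_of_nonneg_right h1 (norm_nonneg v)
      _ = ‖mApp B v‖ := h2

lemma mApp_transpose_inner {n : ℕ} (B : Matrix (Fin n) (Fin n) ℝ)
    (u y : EuclideanSpace ℝ (Fin n)) :
    (inner ℝ u (mApp B.transpose y) : ℝ) = inner ℝ (mApp B u) y := by
  have h1 : mApp B.transpose y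
      = ContinuousLinearMap.adjoint (Matrix.toEuclideanCLM (𝕜 := ℝ) B) y := by
    rw [mApp, ← ContinuousLinearMap.star_eq_adjoint, ← map_star,
      Matrix.star_eq_conjTranspose, Matrix.conjTranspose_eq_transpose_of_trivial]
  rw [h1, ContinuousLinearMap.adjoint_inner_right]; rfl

theorem stmt_7 {n : ℕ} (B₀ : Matrix (Fin n) (Fin n) ℝ) (b₀ : EuclideanSpace ℝ (Fin n))
    (φ : EuclideanSpace ℝ (Fin n) → EuclideanSpace ℝ (Fin n)) (L : ℝ)
    (hφ : ∀ x y, ‖φ x - φ y‖ ≤ L * ‖x - y‖) (hσ : L < sigmaMin B₀)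
    (ψ : EuclideanSpace ℝ (Fin n) → EuclideanSpace ℝ (Fin n))
    (hψ : ∀ x, ψ x = mApp B₀ x + b₀ + φ x)
    (xs : EuclideanSpace ℝ (Fin n)) (hxs : ψ xs = 0) :
    ∀ x : EuclideanSpace ℝ (Fin n),
      (inner ℝ (x - xs) (mApp B₀.transpose (ψ x)) : ℝ) ≥ (1 / 2) * ‖ψ x‖ ^ 2 := by
  intro x
  set u := x - xs with hu
  set w := φ x - φ xs with hw
  set a := mApp B₀ u with ha
  have hlin : mApp B₀ u = mApp B₀ x - mApp B₀ xs := by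
    simp [mApp, hu, map_sub]
  have hψx : ψ x = a + w := by
    have h0 : mApp B₀ xs + b₀ + φ xs = 0 := by rw [← hψ xs]; exact hxs
    have hsub : ψ x - (a + w) = mApp B₀ xs + b₀ + φ xs := by
      rw [hψ x, ha, hlin, hw]; abel
    have : ψ x - (a + w) = 0 := by rw [hsub, h0]
    exact sub_eq_zero.mp this
  -- norm bounds
  have hwle : ‖w‖ ≤ ‖a‖ := by
    have h1 : ‖w‖ ≤ L * ‖u‖ := hφ x xs
    have h2 : sigmaMin B₀ * ‖u‖ ≤ ‖a‖ := sigmaMin_mul_le B₀ u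
    have h3 : L * ‖u‖ ≤ sigmaMin B₀ * ‖u‖ :=
      mul_le_mul_of_nonneg_right (le_of_lt hσ) (norm_nonneg u)
    linarith
  have hinner : (inner ℝ u (mApp B₀.transpose (ψ x)) : ℝ) = inner ℝ a (ψ x) :=
    mApp_transpose_inner B₀ u (ψ x)
  rw [hinner, hψx]
  have hexp : (inner ℝ a (a + w) : ℝ) = ‖a‖ ^ 2 + inner ℝ a w := by
    rw [inner_add_right, real_inner_self_eq_norm_sq]
  have hnorm : ‖a + w‖ ^ 2 = ‖a‖ ^ 2 + 2 * inner ℝ a w + ‖w‖ ^ 2 := norm_add_sq_real a w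
  have hwsq : ‖w‖ ^ 2 ≤ ‖a‖ ^ 2 := by
    nlinarith [norm_nonneg w, norm_nonneg a]
  rw [ge_iff_le, hexp, hnorm]
  nlinarith
end

section
/- Let A₀, A₁, A₂ ∈ ℝ^{n×n} and Ω be a positive diagonal matrix such that σ_min(2ΩA₀ + A₁ + A₂) > 2‖A₁ − A₂‖ + ‖2ΩA₀ − A₁ − A₂‖. Then for all q₀, q₁, q₂ ∈ ℝⁿ, the extended vertical linear complementarity problem min{A₀x + q₀, A₁x + q₁, A₂x + q₂} = 0 has a unique solution x ∈ ℝⁿ. -/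
theorem scalar_key (ω a b c : ℝ) (hω : 0 < ω) :
    min a (min b c) = 0 ↔
      2*ω*a + b + c - |b - c| - abs (2*ω*a - b - c + abs (b - c)) = 0 := by
  have habs : |b - c| = b + c - 2 * min b c := by
    rw [← max_sub_min_eq_abs]
    linarith [min_add_max b c, min_comm b c, max_comm b c]
  set m := min b c with hmdef
  rw [habs]
  have h2 : 2*ω*a - b - c + (b + c - 2*m) = 2*ω*a - 2*m := by ring
  rw [h2]
  rcases abs_cases (2*ω*a - 2*m) with ⟨h1,h1'⟩|⟨h1,h1'⟩ <;> rw [h1] <;>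
    rcases min_cases a m with ⟨h3,h4⟩|⟨h3,h4⟩ <;> rw [h3] <;> constructor <;> intro h <;> nlinarith

theorem vabs_lip {n : ℕ} (a b : EuclideanSpace ℝ (Fin n)) : ‖vabs a - vabs b‖ ≤ ‖a - b‖ := by
  rw [EuclideanSpace.norm_eq, EuclideanSpace.norm_eq]
  apply Real.sqrt_le_sqrt
  apply Finset.sum_le_sum
  intro i _
  have h1 : (vabs a - vabs b) i = |a i| - |b i| := rfl
  have h2 : (a - b) i = a i - b i := rfl
  rw [h1, h2]
  have h3 : ‖|a i| - |b i|‖ ≤ ‖a i - b i‖ := by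
    simpa [Real.norm_eq_abs] using abs_abs_sub_abs_le_abs_sub (a i) (b i)
  gcongr

theorem mApp_norm_le {n : ℕ} (B : Matrix (Fin n) (Fin n) ℝ) (x : EuclideanSpace ℝ (Fin n)) :
    ‖mApp B x‖ ≤ specNorm B * ‖x‖ := (Matrix.toEuclideanCLM (𝕜 := ℝ) B).le_opNorm x

theorem specNorm_nonneg {n : ℕ} (B : Matrix (Fin n) (Fin n) ℝ) : 0 ≤ specNorm B :=
  norm_nonneg _

theorem sigma_le {n : ℕ} (M : Matrix (Fin n) (Fin n) ℝ) (x : EuclideanSpace ℝ (Fin n)) :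
    sigmaMin M * ‖x‖ ≤ ‖mApp M x‖ := by
  rcases eq_or_ne x 0 with rfl | hx
  · simp [mApp]
  · have hxn : (0:ℝ) < ‖x‖ := norm_pos_iff.mpr hx
    set v : EuclideanSpace ℝ (Fin n) := ‖x‖⁻¹ • x with hv
    have hvn : ‖v‖ = 1 := by
      rw [hv, norm_smul, norm_inv, norm_norm, inv_mul_cancel₀ hxn.ne']
    have hmem : ‖mApp M v‖ ∈ {r : ℝ | ∃ v : EuclideanSpace ℝ (Fin n), ‖v‖ = 1 ∧ r = ‖mApp M v‖} :=
      ⟨v, hvn, rfl⟩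
    have hbdd : BddBelow {r : ℝ | ∃ v : EuclideanSpace ℝ (Fin n), ‖v‖ = 1 ∧ r = ‖mApp M v‖} :=
      ⟨0, fun r ⟨w, _, hw⟩ => hw ▸ norm_nonneg _⟩
    have h1 : sigmaMin M ≤ ‖mApp M v‖ := csInf_le hbdd hmem
    have h2 : ‖mApp M v‖ = ‖x‖⁻¹ * ‖mApp M x‖ := by
      rw [hv]
      have : mApp M (‖x‖⁻¹ • x) = ‖x‖⁻¹ • mApp M x := by
        simp [mApp, map_smul]
      rw [this, norm_smul, norm_inv, norm_norm]
    rw [h2] at h1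
    calc sigmaMin M * ‖x‖ ≤ (‖x‖⁻¹ * ‖mApp M x‖) * ‖x‖ := by
          apply mul_le_mul_of_nonneg_right h1 (norm_nonneg _)
      _ = ‖mApp M x‖ := by field_simp

set_option maxHeartbeats 1000000 in
theorem stmt_13 {n : ℕ} (Ω A₀ A₁ A₂ : Matrix (Fin n) (Fin n) ℝ)
    (hdiag : Ω.IsDiag) (hpos : ∀ i, 0 < Ω i i)
    (hσ : sigmaMin ((2 : ℝ) • (Ω * A₀) + A₁ + A₂) >
        2 * specNorm (A₁ - A₂) + specNorm ((2 : ℝ) • (Ω * A₀) - A₁ - A₂)) :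
    ∀ q₀ q₁ q₂ : EuclideanSpace ℝ (Fin n), ∃! x : EuclideanSpace ℝ (Fin n),
      ∀ i, min ((mApp A₀ x + q₀) i)
          (min ((mApp A₁ x + q₁) i) ((mApp A₂ x + q₂) i)) = 0 := by
  intro q₀ q₁ q₂
  set Mm : Matrix (Fin n) (Fin n) ℝ := (2 : ℝ) • (Ω * A₀) + A₁ + A₂ with hMm
  set D : Matrix (Fin n) (Fin n) ℝ := A₁ - A₂ with hD
  set Bm : Matrix (Fin n) (Fin n) ℝ := (2 : ℝ) • (Ω * A₀) - A₁ - A₂ with hBm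
  set σ : ℝ := sigmaMin Mm with hσdef
  have hσpos : 0 < σ := by
    have h1 := specNorm_nonneg D
    have h2 := specNorm_nonneg Bm
    calc (0:ℝ) ≤ 2 * specNorm D + specNorm Bm := by linarith
      _ < σ := hσ
  -- T and its inverse
  set T := Matrix.toEuclideanCLM (𝕜 := ℝ) Mm with hT
  have hTkey : ∀ z, σ * ‖z‖ ≤ ‖T z‖ := fun z => sigma_le Mm z
  have hTinj : Function.Injective T := by
    intro x y hxy
    have h0 : T (x - y) = 0 := by rw [map_sub, hxy, sub_self]
    have h1 := hTkey (x - y)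
    rw [h0, norm_zero] at h1
    have h2 : ‖x - y‖ ≤ 0 := by nlinarith [norm_nonneg (x - y)]
    have h3 : x - y = 0 := norm_eq_zero.mp (le_antisymm h2 (norm_nonneg _))
    exact sub_eq_zero.mp h3
  -- the continuous linear equivalence induced by T
  have hTbij : Function.Bijective T :=
    ⟨hTinj, LinearMap.injective_iff_surjective.mp hTinj⟩
  set e : EuclideanSpace ℝ (Fin n) ≃L[ℝ] EuclideanSpace ℝ (Fin n) :=
    (LinearEquiv.ofBijective (T : EuclideanSpace ℝ (Fin n) →ₗ[ℝ] EuclideanSpace ℝ (Fin n))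
      hTbij).toContinuousLinearEquiv with he
  have he_apply : ∀ x, e x = T x := fun x => rfl
  have hsymm : ∀ z, ‖e.symm z‖ ≤ σ⁻¹ * ‖z‖ := by
    intro z
    have h1 := hTkey (e.symm z)
    rw [← he_apply, e.apply_symm_apply] at h1
    rw [le_inv_mul_iff₀ hσpos]
    exact h1
  -- data
  set d0 : EuclideanSpace ℝ (Fin n) := mApp ((2:ℝ) • Ω) q₀ with hd0
  set u : EuclideanSpace ℝ (Fin n) → EuclideanSpace ℝ (Fin n) :=
    fun x => mApp D x + (q₁ - q₂) with hu
  set w : EuclideanSpace ℝ (Fin n) → EuclideanSpace ℝ (Fin n) :=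
    fun x => mApp Bm x + vabs (u x) + (d0 - q₁ - q₂) with hw
  set c₀ : EuclideanSpace ℝ (Fin n) := d0 + q₁ + q₂ with hc0
  set F : EuclideanSpace ℝ (Fin n) → EuclideanSpace ℝ (Fin n) :=
    fun x => e.symm (vabs (u x) + vabs (w x) - c₀) with hF
  -- Lipschitz estimates
  have hud : ∀ x y, ‖u x - u y‖ ≤ specNorm D * ‖x - y‖ := by
    intro x y
    have : u x - u y = mApp D (x - y) := by
      simp only [hu, mApp, map_sub]
      abel
    rw [this]
    exact mApp_norm_le D (x - y)
  have hvu : ∀ x y, ‖vabs (u x) - vabs (u y)‖ ≤ specNorm D * ‖x - y‖ :=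
    fun x y => le_trans (vabs_lip _ _) (hud x y)
  have hwd : ∀ x y, ‖w x - w y‖ ≤ (specNorm Bm + specNorm D) * ‖x - y‖ := by
    intro x y
    have h1 : w x - w y = mApp Bm (x - y) + (vabs (u x) - vabs (u y)) := by
      simp only [hw, mApp, map_sub]
      abel
    rw [h1]
    calc ‖mApp Bm (x - y) + (vabs (u x) - vabs (u y))‖
        ≤ ‖mApp Bm (x - y)‖ + ‖vabs (u x) - vabs (u y)‖ := norm_add_le _ _
      _ ≤ specNorm Bm * ‖x - y‖ + specNorm D * ‖x - y‖ :=
          add_le_add (mApp_norm_le Bm (x - y)) (hvu x y)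
      _ = (specNorm Bm + specNorm D) * ‖x - y‖ := by ring
  have hFd : ∀ x y, ‖F x - F y‖ ≤ (σ⁻¹ * (2 * specNorm D + specNorm Bm)) * ‖x - y‖ := by
    intro x y
    have h1 : F x - F y = e.symm ((vabs (u x) - vabs (u y)) + (vabs (w x) - vabs (w y))) := by
      show e.symm _ - e.symm _ = _
      rw [← map_sub]
      congr 1
      abel
    rw [h1]
    calc ‖e.symm ((vabs (u x) - vabs (u y)) + (vabs (w x) - vabs (w y)))‖
        ≤ σ⁻¹ * ‖(vabs (u x) - vabs (u y)) + (vabs (w x) - vabs (w y))‖ := hsymm _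
      _ ≤ σ⁻¹ * (‖vabs (u x) - vabs (u y)‖ + ‖vabs (w x) - vabs (w y)‖) := by
          apply mul_le_mul_of_nonneg_left (norm_add_le _ _) (inv_nonneg.mpr hσpos.le)
      _ ≤ σ⁻¹ * (specNorm D * ‖x - y‖ +
            ((specNorm Bm + specNorm D) * ‖x - y‖)) := by
          apply mul_le_mul_of_nonneg_left _ (inv_nonneg.mpr hσpos.le)
          exact add_le_add (hvu x y) (le_trans (vabs_lip _ _) (hwd x y))
      _ = (σ⁻¹ * (2 * specNorm D + specNorm Bm)) * ‖x - y‖ := by ring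
  -- contraction
  set k : NNReal := Real.toNNReal (σ⁻¹ * (2 * specNorm D + specNorm Bm)) with hk
  have hknn : (0:ℝ) ≤ σ⁻¹ * (2 * specNorm D + specNorm Bm) := by
    have h1 := specNorm_nonneg D
    have h2 := specNorm_nonneg Bm
    exact mul_nonneg (inv_nonneg.mpr hσpos.le) (by linarith)
  have hkcoe : (k:ℝ) = σ⁻¹ * (2 * specNorm D + specNorm Bm) := Real.coe_toNNReal _ hknn
  have hklt : k < 1 := by
    rw [← NNReal.coe_lt_coe, hkcoe, NNReal.coe_one]
    have h3 : σ⁻¹ * (2 * specNorm D + specNorm Bm) < σ⁻¹ * σ :=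
      mul_lt_mul_of_pos_left hσ (inv_pos.mpr hσpos)
    rwa [inv_mul_cancel₀ hσpos.ne'] at h3
  have hC : ContractingWith k F := by
    refine ⟨hklt, LipschitzWith.of_dist_le_mul fun x y => ?_⟩
    rw [dist_eq_norm, dist_eq_norm, hkcoe]
    exact hFd x y
  -- the equivalence with the complementarity problem
  have hΩapp : ∀ (y : EuclideanSpace ℝ (Fin n)) i, mApp Ω y i = Ω i i * y i := by
    intro y i
    show ∑ j, Ω i j * y j = Ω i i * y i
    rw [Finset.sum_eq_single i]
    · intro j _ hj
      rw [hdiag (Ne.symm hj), zero_mul]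
    · intro h
      exact absurd (Finset.mem_univ i) h
  have hequiv : ∀ x : EuclideanSpace ℝ (Fin n),
      (∀ i, min ((mApp A₀ x + q₀) i)
          (min ((mApp A₁ x + q₁) i) ((mApp A₂ x + q₂) i)) = 0) ↔ F x = x := by
    intro x
    have hd0i : ∀ i, d0 i = 2 * Ω i i * q₀ i := by
      intro i
      have : d0 = (2:ℝ) • mApp Ω q₀ := by simp [hd0, mApp]
      rw [this]
      have : ((2:ℝ) • mApp Ω q₀) i = 2 * mApp Ω q₀ i := rfl
      rw [this, hΩapp]
      ring
    have hTi : ∀ i, T x i = 2 * Ω i i * mApp A₀ x i + mApp A₁ x i + mApp A₂ x i := by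
      intro i
      have h1 : T x = (2:ℝ) • mApp Ω (mApp A₀ x) + mApp A₁ x + mApp A₂ x := by
        show mApp Mm x = _
        simp [hMm, mApp]
      rw [h1]
      have h2 : ((2:ℝ) • mApp Ω (mApp A₀ x) + mApp A₁ x + mApp A₂ x) i
          = 2 * mApp Ω (mApp A₀ x) i + mApp A₁ x i + mApp A₂ x i := rfl
      rw [h2, hΩapp]
      ring
    have hui : ∀ i, u x i = (mApp A₁ x + q₁) i - (mApp A₂ x + q₂) i := by
      intro i
      have h1 : u x i = mApp D x i + (q₁ i - q₂ i) := rfl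
      have h2 : mApp D x i = mApp A₁ x i - mApp A₂ x i := by
        have : mApp D x = mApp A₁ x - mApp A₂ x := by simp [hD, mApp]
        rw [this]; rfl
      rw [h1, h2]
      show _ = (mApp A₁ x i + q₁ i) - (mApp A₂ x i + q₂ i)
      ring
    have hwi : ∀ i, w x i = 2 * Ω i i * ((mApp A₀ x + q₀) i)
        - (mApp A₁ x + q₁) i - (mApp A₂ x + q₂) i + |u x i| := by
      intro i
      have h1 : w x i = mApp Bm x i + |u x i| + (d0 i - q₁ i - q₂ i) := rfl
      have h2 : mApp Bm x i = 2 * Ω i i * mApp A₀ x i - mApp A₁ x i - mApp A₂ x i := by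
        have h3 : mApp Bm x = (2:ℝ) • mApp Ω (mApp A₀ x) - mApp A₁ x - mApp A₂ x := by
          simp [hBm, mApp]
        rw [h3]
        have h4 : ((2:ℝ) • mApp Ω (mApp A₀ x) - mApp A₁ x - mApp A₂ x) i
            = 2 * mApp Ω (mApp A₀ x) i - mApp A₁ x i - mApp A₂ x i := rfl
        rw [h4, hΩapp]
        ring
      rw [h1, h2, hd0i]
      show _ = 2 * Ω i i * (mApp A₀ x i + q₀ i) - (mApp A₁ x i + q₁ i)
        - (mApp A₂ x i + q₂ i) + |u x i|
      ring
    constructor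
    · intro hmin
      show e.symm (vabs (u x) + vabs (w x) - c₀) = x
      rw [ContinuousLinearEquiv.symm_apply_eq, he_apply]
      ext i
      have h0 := (scalar_key (Ω i i) ((mApp A₀ x + q₀) i) ((mApp A₁ x + q₁) i)
        ((mApp A₂ x + q₂) i) (hpos i)).mp (hmin i)
      have hgoal : T x i = |u x i| + |w x i| - c₀ i := by
        rw [hTi, hwi, hui]
        have hc : c₀ i = 2 * Ω i i * q₀ i + q₁ i + q₂ i := by
          show d0 i + q₁ i + q₂ i = _
          rw [hd0i]
        rw [hc]
        show 2 * Ω i i * mApp A₀ x i + mApp A₁ x i + mApp A₂ x i = _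
        have ha : (mApp A₀ x + q₀) i = mApp A₀ x i + q₀ i := rfl
        have hb : (mApp A₁ x + q₁) i = mApp A₁ x i + q₁ i := rfl
        have hcc : (mApp A₂ x + q₂) i = mApp A₂ x i + q₂ i := rfl
        rw [ha, hb, hcc] at h0 ⊢
        linear_combination h0
      have hrhs : (vabs (u x) + vabs (w x) - c₀) i = |u x i| + |w x i| - c₀ i := rfl
      rw [hrhs]
      exact hgoal.symm
    · intro hfix i
      apply (scalar_key (Ω i i) ((mApp A₀ x + q₀) i) ((mApp A₁ x + q₁) i)
        ((mApp A₂ x + q₂) i) (hpos i)).mpr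
      have h1 : e x = vabs (u x) + vabs (w x) - c₀ := by
        conv_lhs => rw [← hfix]
        exact e.apply_symm_apply _
      have h2 : T x i = |u x i| + |w x i| - c₀ i := by
        rw [← he_apply]
        rw [h1]
        rfl
      rw [hTi, hwi, hui] at h2
      have hc : c₀ i = 2 * Ω i i * q₀ i + q₁ i + q₂ i := by
        show d0 i + q₁ i + q₂ i = _
        rw [hd0i]
      rw [hc] at h2
      have ha : (mApp A₀ x + q₀) i = mApp A₀ x i + q₀ i := rfl
      have hb : (mApp A₁ x + q₁) i = mApp A₁ x i + q₁ i := rfl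
      have hcc : (mApp A₂ x + q₂) i = mApp A₂ x i + q₂ i := rfl
      rw [ha, hb, hcc] at h2 ⊢
      linear_combination h2
  -- conclude via Banach fixed point
  refine ⟨hC.fixedPoint F, ?_, ?_⟩
  · exact (hequiv _).mpr hC.fixedPoint_isFixedPt
  · intro y hy
    exact hC.fixedPoint_unique ((hequiv y).mp hy)
end
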